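/- The derivative of n_p(ρ) = (-κ + √(κ(κ + nλρ)))/(λρ) with κ = λρ + σ² with respect to ρ equals -σ²[2κ + nρλ - 2√(κ(κ + nρλ))] / (2λρ²√(κ(κ + nρλ))), and this is strictly negative for all ρ > 0. -/

import Mathlib

/-- The derivative of `n_p(ρ) = (-κ + √(κ(κ + nλρ)))/(λρ)`, `κ = λρ + σ²`, equals
`-σ²[2κ + nρλ - 2√(κ(κ + nρλ))]/(2λρ²√(κ(κ + nρλ)))` and is strictly negative for `ρ > 0`. -/
theorem stmt_10 (lam σ2 n : ℝ) (hlam : 0 < lam) (hσ : 0 < σ2) (hn : 0 < n)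
    (ρ : ℝ) (hρ : 0 < ρ) :
    deriv (fun ρ : ℝ =>
        (-(lam * ρ + σ2) + Real.sqrt ((lam * ρ + σ2) * ((lam * ρ + σ2) + n * lam * ρ)))
          / (lam * ρ)) ρ
      = -(σ2 * (2 * (lam * ρ + σ2) + n * ρ * lam
            - 2 * Real.sqrt ((lam * ρ + σ2) * ((lam * ρ + σ2) + n * ρ * lam))))
        / (2 * lam * ρ ^ 2 * Real.sqrt ((lam * ρ + σ2) * ((lam * ρ + σ2) + n * ρ * lam))) ∧
    deriv (fun ρ : ℝ =>
        (-(lam * ρ + σ2) + Real.sqrt ((lam * ρ + σ2) * ((lam * ρ + σ2) + n * lam * ρ)))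
          / (lam * ρ)) ρ < 0 := by
  set κ : ℝ := lam * ρ + σ2 with hκdef
  have hκ : 0 < κ := by positivity
  set S : ℝ := κ * (κ + n * lam * ρ) with hSdef
  have hS : 0 < S := by
    have : 0 < κ + n * lam * ρ := by positivity
    exact mul_pos hκ this
  set s : ℝ := Real.sqrt S with hsdef
  have hs : 0 < s := Real.sqrt_pos.mpr hS
  have hs2 : s ^ 2 = S := Real.sq_sqrt hS.le
  have h1 : HasDerivAt (fun x : ℝ => lam * x + σ2) lam ρ := by
    simpa using ((hasDerivAt_id ρ).const_mul lam).add_const σ2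
  have h2 : HasDerivAt (fun x : ℝ => (lam * x + σ2) + n * lam * x) (lam + n * lam) ρ := by
    have := h1.add ((hasDerivAt_id ρ).const_mul (n * lam))
    simp only [mul_one] at this
    exact this
  have hS' : HasDerivAt (fun x : ℝ => (lam * x + σ2) * ((lam * x + σ2) + n * lam * x))
      (lam * (κ + n * lam * ρ) + κ * (lam + n * lam)) ρ := h1.mul h2
  have hsqrt : HasDerivAt (fun x : ℝ => Real.sqrt ((lam * x + σ2) * ((lam * x + σ2) + n * lam * x)))
      ((lam * (κ + n * lam * ρ) + κ * (lam + n * lam)) / (2 * s)) ρ :=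
    hS'.sqrt hS.ne'
  have hnum : HasDerivAt (fun x : ℝ => -(lam * x + σ2) +
      Real.sqrt ((lam * x + σ2) * ((lam * x + σ2) + n * lam * x)))
      (-lam + (lam * (κ + n * lam * ρ) + κ * (lam + n * lam)) / (2 * s)) ρ := h1.neg.add hsqrt
  have hden : HasDerivAt (fun x : ℝ => lam * x) lam ρ := by
    simpa using (hasDerivAt_id ρ).const_mul lam
  have hlρ : lam * ρ ≠ 0 := (mul_pos hlam hρ).ne'
  have hf := (hnum.div hden hlρ).deriv
  have hrw : (lam * ρ + σ2) * ((lam * ρ + σ2) + n * ρ * lam) = S := by rw [hSdef, hκdef]; ring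
  have hrw2 : Real.sqrt ((lam * ρ + σ2) * ((lam * ρ + σ2) + n * lam * ρ)) = s := by
    rw [hsdef, hSdef, hκdef]
  rw [hrw2] at hf
  have hSκ : S = κ * (κ + n * lam * ρ) := hSdef
  have hκρ : κ = lam * ρ + σ2 := hκdef
  clear_value s S κ
  have key : deriv (fun ρ : ℝ =>
        (-(lam * ρ + σ2) + Real.sqrt ((lam * ρ + σ2) * ((lam * ρ + σ2) + n * lam * ρ)))
          / (lam * ρ)) ρ
      = -(σ2 * (2 * κ + n * ρ * lam - 2 * s)) / (2 * lam * ρ ^ 2 * s) := by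
    refine hf.trans ?_
    have h2s : (2 : ℝ) * s ≠ 0 := by positivity
    have hsP : s ^ 2 = (lam * ρ + σ2) * ((lam * ρ + σ2) + n * lam * ρ) := by
      rw [hs2, hSκ, hκρ]
    rw [hκρ]
    field_simp
    linear_combination (-2) * hsP
  have hlt : 2 * s < 2 * κ + n * ρ * lam := by
    nlinarith [hs2, hs, hκ, mul_pos (mul_pos hn hρ) hlam, hSκ, hκρ]
  have hrw3 : Real.sqrt (κ * (κ + n * ρ * lam)) = s := by
    rw [show κ * (κ + n * ρ * lam) = S by rw [hSκ]; ring, ← hsdef]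
  constructor
  · rw [key, hrw3]
  · rw [key]
    apply div_neg_of_neg_of_pos
    · have : 0 < σ2 * (2 * κ + n * ρ * lam - 2 * s) := by nlinarith
      linarith
    · positivity
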